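/- On the subspace 𝔪₊ = Span{E₁₃−E₂₃, E₁₄−E₂₄} ⊂ 𝔬(3,1), the linear map J defined by J(E₁₃−E₂₃) = −(E₁₄−E₂₄) and J(E₁₄−E₂₄) = E₁₃−E₂₃ is a complex structure (J² = −id), and it is equivariant under the adjoint action of the stabilizer algebra 𝔥₊ modulo 𝔥₊: for all h ∈ 𝔥₊ and m ∈ 𝔪₊, [h, Jm] − J[h,m] ∈ 𝔥₊. -/

import Mathlib

open Matrix

/-- The signs `ε₁ = -1`, `ε₂ = ε₃ = ε₄ = 1` of the Minkowski form (0-indexed). -/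
def eps : Fin 4 → ℝ := fun i => if i = 0 then -1 else 1

/-- The standard generators `E_ij` of `𝔬(3,1)`. -/
def EM (i j : Fin 4) : Matrix (Fin 4) (Fin 4) ℝ :=
  Matrix.of fun k l =>
    if k = j ∧ l = i then eps i else if k = i ∧ l = j then -(eps j) else 0

/-- `𝔥₊ = Span{E₁₂, E₁₃+E₂₃, E₁₄+E₂₄, E₃₄}` (0-indexed). -/
noncomputable def hplus : Submodule ℝ (Matrix (Fin 4) (Fin 4) ℝ) :=
  Submodule.span ℝ {EM 0 1, EM 0 2 + EM 1 2, EM 0 3 + EM 1 3, EM 2 3}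

/-- First basis vector `a = E₁₃ − E₂₃` of `𝔪₊` (0-indexed). -/
noncomputable def aM : Matrix (Fin 4) (Fin 4) ℝ := EM 0 2 - EM 1 2

/-- Second basis vector `b = E₁₄ − E₂₄` of `𝔪₊` (0-indexed). -/
noncomputable def bM : Matrix (Fin 4) (Fin 4) ℝ := EM 0 3 - EM 1 3

/-- In coordinates `m = x•a + y•b` of `𝔪₊`, the map `J` with `J a = -b`, `J b = a`
is `(x, y) ↦ (y, -x)`. -/
def Jc (p : ℝ × ℝ) : ℝ × ℝ := (p.2, -p.1)

lemma fv0 : ((0:Fin 4):ℕ) = 0 := rfl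
lemma fv1 : ((1:Fin 4):ℕ) = 1 := rfl
lemma fv2 : ((2:Fin 4):ℕ) = 2 := rfl
lemma fv3 : ((3:Fin 4):ℕ) = 3 := rfl

lemma mem1 : EM 0 1 ∈ hplus := Submodule.subset_span (by simp)
lemma mem2 : EM 0 2 + EM 1 2 ∈ hplus := Submodule.subset_span (by simp)
lemma mem3 : EM 0 3 + EM 1 3 ∈ hplus := Submodule.subset_span (by simp)
lemma mem4 : EM 2 3 ∈ hplus := Submodule.subset_span (by simp)

lemma mlie_add (a b c : Matrix (Fin 4) (Fin 4) ℝ) : ⁅a, b + c⁆ = ⁅a, b⁆ + ⁅a, c⁆ := by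
  rw [Ring.lie_def, Ring.lie_def, Ring.lie_def]; noncomm_ring
lemma madd_lie (a b c : Matrix (Fin 4) (Fin 4) ℝ) : ⁅a + b, c⁆ = ⁅a, c⁆ + ⁅b, c⁆ := by
  rw [Ring.lie_def, Ring.lie_def, Ring.lie_def]; noncomm_ring
lemma mlie_smul (r : ℝ) (a b : Matrix (Fin 4) (Fin 4) ℝ) : ⁅a, r • b⁆ = r • ⁅a, b⁆ := by
  rw [Ring.lie_def, Ring.lie_def, mul_smul_comm, smul_mul_assoc, smul_sub]
lemma msmul_lie (r : ℝ) (a b : Matrix (Fin 4) (Fin 4) ℝ) : ⁅r • a, b⁆ = r • ⁅a, b⁆ := by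
  rw [Ring.lie_def, Ring.lie_def, mul_smul_comm, smul_mul_assoc, smul_sub]
lemma mlie_neg (a b : Matrix (Fin 4) (Fin 4) ℝ) : ⁅a, -b⁆ = -⁅a, b⁆ := by
  rw [Ring.lie_def, Ring.lie_def]; noncomm_ring
lemma mzero_lie (b : Matrix (Fin 4) (Fin 4) ℝ) : ⁅(0 : Matrix (Fin 4) (Fin 4) ℝ), b⁆ = 0 := by
  rw [Ring.lie_def]; simp

lemma l1a : ⁅EM 0 1, aM⁆ = aM := by
  rw [Ring.lie_def]
  ext i j
  fin_cases i <;> fin_cases j <;>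
    simp +decide [Ring.lie_def, Matrix.mul_apply, Fin.sum_univ_four, EM, aM, eps, fv0, fv1, fv2, fv3,
      Matrix.sub_apply] <;> norm_num

lemma l1b : ⁅EM 0 1, bM⁆ = bM := by
  rw [Ring.lie_def]
  ext i j
  fin_cases i <;> fin_cases j <;>
    simp +decide [Ring.lie_def, Matrix.mul_apply, Fin.sum_univ_four, EM, bM, eps, fv0, fv1, fv2, fv3,
      Matrix.sub_apply] <;> norm_num

lemma l2a : ⁅EM 0 2 + EM 1 2, aM⁆ = (-2 : ℝ) • EM 0 1 := by
  rw [Ring.lie_def]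
  ext i j
  fin_cases i <;> fin_cases j <;>
    simp +decide [Ring.lie_def, Matrix.mul_apply, Fin.sum_univ_four, EM, aM, eps, fv0, fv1, fv2, fv3,
      Matrix.sub_apply, Matrix.add_apply, Matrix.smul_apply] <;> norm_num

lemma l2b : ⁅EM 0 2 + EM 1 2, bM⁆ = (-2 : ℝ) • EM 2 3 := by
  rw [Ring.lie_def]
  ext i j
  fin_cases i <;> fin_cases j <;>
    simp +decide [Ring.lie_def, Matrix.mul_apply, Fin.sum_univ_four, EM, bM, eps, fv0, fv1, fv2, fv3,
      Matrix.sub_apply, Matrix.add_apply, Matrix.smul_apply] <;> norm_num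

lemma l3a : ⁅EM 0 3 + EM 1 3, aM⁆ = (2 : ℝ) • EM 2 3 := by
  rw [Ring.lie_def]
  ext i j
  fin_cases i <;> fin_cases j <;>
    simp +decide [Ring.lie_def, Matrix.mul_apply, Fin.sum_univ_four, EM, aM, eps, fv0, fv1, fv2, fv3,
      Matrix.sub_apply, Matrix.add_apply, Matrix.smul_apply] <;> norm_num

lemma l3b : ⁅EM 0 3 + EM 1 3, bM⁆ = (-2 : ℝ) • EM 0 1 := by
  rw [Ring.lie_def]
  ext i j
  fin_cases i <;> fin_cases j <;>
    simp +decide [Ring.lie_def, Matrix.mul_apply, Fin.sum_univ_four, EM, bM, eps, fv0, fv1, fv2, fv3,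
      Matrix.sub_apply, Matrix.add_apply, Matrix.smul_apply] <;> norm_num

lemma l4a : ⁅EM 2 3, aM⁆ = bM := by
  rw [Ring.lie_def]
  ext i j
  fin_cases i <;> fin_cases j <;>
    simp +decide [Ring.lie_def, Matrix.mul_apply, Fin.sum_univ_four, EM, aM, bM, eps, fv0, fv1, fv2, fv3,
      Matrix.sub_apply] <;> norm_num

lemma l4b : ⁅EM 2 3, bM⁆ = -aM := by
  rw [Ring.lie_def]
  ext i j
  fin_cases i <;> fin_cases j <;>
    simp +decide [Ring.lie_def, Matrix.mul_apply, Fin.sum_univ_four, EM, aM, bM, eps, fv0, fv1, fv2, fv3,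
      Matrix.sub_apply, Matrix.neg_apply] <;> norm_num

/-- The map `J(E₁₃−E₂₃) = −(E₁₄−E₂₄)`, `J(E₁₄−E₂₄) = E₁₃−E₂₃` is a complex structure on
`𝔪₊` (i.e. `J² = -id`), and it is `ad(𝔥₊)`-equivariant modulo `𝔥₊`:
for `h ∈ 𝔥₊` and `m ∈ 𝔪₊` one has `[h, Jm] − J[h,m] ∈ 𝔥₊`, where `J[h,m]` denotes `J`
applied to the `𝔪₊`-component of `[h,m]`. -/
theorem complex_structure_on_mplus_equivariant_mod_hplus :
    (∀ p : ℝ × ℝ, Jc (Jc p) = -p) ∧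
    (∀ h ∈ hplus, ∀ x y : ℝ, ∃ x' y' : ℝ,
      ⁅h, x • aM + y • bM⁆ - (x' • aM + y' • bM) ∈ hplus ∧
      ⁅h, y • aM + (-x) • bM⁆ - (y' • aM + (-x') • bM) ∈ hplus) := by
  constructor
  · intro p; simp [Jc, Prod.ext_iff]
  · intro h hh
    induction hh using Submodule.span_induction with
    | mem g hg =>
      rcases hg with rfl | rfl | rfl | rfl
      · intro x y
        exact ⟨x, y, by simp [mlie_add, mlie_smul, mlie_neg, l1a, l1b],
          by simp [mlie_add, mlie_smul, mlie_neg, l1a, l1b]⟩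
      · intro x y
        refine ⟨0, 0, ?_, ?_⟩ <;>
          · simp only [mlie_add, mlie_smul, mlie_neg, l2a, l2b, zero_smul, add_zero, neg_zero, sub_zero]
            exact add_mem (Submodule.smul_mem _ _ (Submodule.smul_mem _ _ mem1))
              (Submodule.smul_mem _ _ (Submodule.smul_mem _ _ mem4))
      · intro x y
        refine ⟨0, 0, ?_, ?_⟩ <;>
          · simp only [mlie_add, mlie_smul, mlie_neg, l3a, l3b, zero_smul, add_zero, neg_zero, sub_zero]
            exact add_mem (Submodule.smul_mem _ _ (Submodule.smul_mem _ _ mem4))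
              (Submodule.smul_mem _ _ (Submodule.smul_mem _ _ mem1))
      · intro x y
        refine ⟨-y, x, ?_, ?_⟩ <;>
          · simp only [mlie_add, mlie_smul, mlie_neg, l4a, l4b]
            convert zero_mem hplus using 1
            module
    | zero =>
      intro x y
      exact ⟨0, 0, by simp [mzero_lie], by simp [mzero_lie]⟩
    | add g₁ g₂ _ _ ih₁ ih₂ =>
      intro x y
      obtain ⟨x₁, y₁, h₁, h₁'⟩ := ih₁ x y
      obtain ⟨x₂, y₂, h₂, h₂'⟩ := ih₂ x y
      refine ⟨x₁ + x₂, y₁ + y₂, ?_, ?_⟩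
      · have := add_mem h₁ h₂
        convert this using 1; simp [madd_lie]; module
      · have := add_mem h₁' h₂'
        convert this using 1; simp [madd_lie]; module
    | smul c g _ ih =>
      intro x y
      obtain ⟨x₁, y₁, h₁, h₁'⟩ := ih x y
      refine ⟨c * x₁, c * y₁, ?_, ?_⟩
      · have := Submodule.smul_mem hplus c h₁
        convert this using 1; simp [msmul_lie, smul_sub]; module
      · have := Submodule.smul_mem hplus c h₁'
        convert this using 1; simp [msmul_lie, smul_sub]; module
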